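/- Let (Y_m)_{m=0}^{M} be integrable real-valued random variables on a probability space with Y_0 = y_0 deterministic and Y_m ≤ J* almost surely for every m, let E_0, …, E_{M−1} be events, and let J_thre > 0 and δ ∈ (0,1]. Suppose that for each m: E[(Y_{m+1} − Y_m) · 1_{E_m}] ≥ J_thre · P(E_m) (sufficient increase on E_m) and E[(Y_{m+1} − Y_m) · 1_{E_m^c}] ≥ −(δ J_thre / 2) · P(E_m^c) (bounded decrease on the complement). If M ≥ 2 (J* − y_0) / (δ J_thre), then (1/M) ∑_{m=0}^{M−1} P(E_m) ≤ δ. -/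

import Mathlib

open MeasureTheory

/-- Probabilistic combination step: if on each 'bad' event `E_m` the
value increases in expectation by at least `J_thre` (per unit probability), and on the
complement it decreases by at most `δJ_thre/2`, and `M ≥ 2(J* − y₀)/(δJ_thre)`, then the
average probability of the bad events is at most `δ`. -/
theorem average_bad_event_probability_bound
    {Ω : Type*} {mΩ : MeasurableSpace Ω} (μ : Measure Ω) [IsProbabilityMeasure μ]
    (M : ℕ) (Y : ℕ → Ω → ℝ)
    (hYint : ∀ m ≤ M, Integrable (Y m) μ)
    (y₀ Jstar Jthre δ : ℝ)
    (hY0 : Y 0 = fun _ => y₀)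
    (hYbdd : ∀ m ≤ M, ∀ᵐ ω ∂μ, Y m ω ≤ Jstar)
    (E : ℕ → Set Ω) (hEmeas : ∀ m, MeasurableSet (E m))
    (hJthre : 0 < Jthre) (hδ : δ ∈ Set.Ioc (0 : ℝ) 1)
    (hincrease : ∀ m < M,
      Jthre * (μ (E m)).toReal ≤ ∫ ω in E m, (Y (m + 1) ω - Y m ω) ∂μ)
    (hdecrease : ∀ m < M,
      -(δ * Jthre / 2) * (μ (E m)ᶜ).toReal ≤ ∫ ω in (E m)ᶜ, (Y (m + 1) ω - Y m ω) ∂μ)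
    (hM : 2 * (Jstar - y₀) / (δ * Jthre) ≤ (M : ℝ)) :
    (1 / (M : ℝ)) * ∑ m ∈ Finset.range M, (μ (E m)).toReal ≤ δ := by
  obtain ⟨hδ0, hδ1⟩ := hδ
  rcases Nat.eq_zero_or_pos M with hM0 | hMpos
  · subst hM0; simp [hδ0.le]
  have hMpos' : (0 : ℝ) < M := by exact_mod_cast hMpos
  set p : ℕ → ℝ := fun m => (μ (E m)).toReal with hp
  have hpc : ∀ m, ((μ (E m)ᶜ).toReal) = 1 - p m := by
    intro m
    rw [measure_compl (hEmeas m) (measure_ne_top μ _), measure_univ,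
      ENNReal.toReal_sub_of_le prob_le_one ENNReal.one_ne_top, ENNReal.toReal_one]
  have hpnn : ∀ m, 0 ≤ p m := fun m => ENNReal.toReal_nonneg
  -- per-step bound on full expectation of increments
  have hstep : ∀ m < M, Jthre * p m - (δ * Jthre / 2) * (1 - p m)
      ≤ ∫ ω, (Y (m + 1) ω - Y m ω) ∂μ := by
    intro m hm
    have hint : Integrable (fun ω => Y (m + 1) ω - Y m ω) μ :=
      (hYint (m + 1) hm).sub (hYint m hm.le)
    have hsplit := integral_add_compl (hEmeas m) hint
    have h1 := hincrease m hm
    have h2 := hdecrease m hm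
    rw [hpc m] at h2
    linarith [h1, h2, hsplit.ge, hsplit.le]
  -- telescoping sum
  have htel : ∑ m ∈ Finset.range M, ∫ ω, (Y (m + 1) ω - Y m ω) ∂μ
      = (∫ ω, Y M ω ∂μ) - y₀ := by
    have : ∀ m ∈ Finset.range M, ∫ ω, (Y (m + 1) ω - Y m ω) ∂μ
        = (∫ ω, Y (m + 1) ω ∂μ) - ∫ ω, Y m ω ∂μ := by
      intro m hm
      rw [Finset.mem_range] at hm
      exact integral_sub (hYint (m + 1) hm) (hYint m hm.le)
    rw [Finset.sum_congr rfl this, Finset.sum_range_sub (fun m => ∫ ω, Y m ω ∂μ)]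
    congr 1
    rw [hY0]
    simp
  have hEYM : ∫ ω, Y M ω ∂μ ≤ Jstar := by
    calc ∫ ω, Y M ω ∂μ ≤ ∫ _ω, Jstar ∂μ :=
          integral_mono_ae (hYint M le_rfl) (integrable_const _) (hYbdd M le_rfl)
      _ = Jstar := by simp
  -- sum the per-step bounds
  have hsum : ∑ m ∈ Finset.range M, (Jthre * p m - (δ * Jthre / 2) * (1 - p m))
      ≤ Jstar - y₀ := by
    calc ∑ m ∈ Finset.range M, (Jthre * p m - (δ * Jthre / 2) * (1 - p m))
        ≤ ∑ m ∈ Finset.range M, ∫ ω, (Y (m + 1) ω - Y m ω) ∂μ :=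
          Finset.sum_le_sum fun m hm => hstep m (Finset.mem_range.mp hm)
      _ = (∫ ω, Y M ω ∂μ) - y₀ := htel
      _ ≤ Jstar - y₀ := by linarith
  set S := ∑ m ∈ Finset.range M, p m with hS
  have hSnn : 0 ≤ S := Finset.sum_nonneg fun m _ => hpnn m
  have hsum' : (Jthre + δ * Jthre / 2) * S - (δ * Jthre / 2) * M ≤ Jstar - y₀ := by
    have : ∑ m ∈ Finset.range M, (Jthre * p m - (δ * Jthre / 2) * (1 - p m))
        = (Jthre + δ * Jthre / 2) * S - (δ * Jthre / 2) * M := by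
      rw [Finset.sum_sub_distrib, ← Finset.mul_sum]
      simp only [mul_one_sub, Finset.sum_sub_distrib, Finset.sum_const,
        Finset.card_range, ← Finset.mul_sum]
      push_cast
      ring
    linarith [this ▸ hsum]
  have hM' : Jstar - y₀ ≤ δ * Jthre / 2 * M := by
    rw [div_le_iff₀ (by positivity)] at hM
    nlinarith
  rw [one_div, inv_mul_le_iff₀ hMpos']
  nlinarith [mul_nonneg hSnn hδ0.le, mul_nonneg (mul_nonneg hSnn hδ0.le) hJthre.le]
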